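/- Let n ≥ 2 and let μ be a finite Borel measure on ℝ^n. For x ∈ ℝ^n and r > 0 define the β-number β_μ(x,r) := inf_P r^{−n} ∫_{B(x,r)} dist(z, P) dμ(z), where the infimum is over all affine hyperplanes P ⊆ ℝ^n (affine subspaces of dimension n−1) and B(x,r) is the open Euclidean ball. Let S ⊆ ℝ^n, c > 0 and r₀ > 0 be such that μ satisfies the lower Ahlfors–David bound μ(B(x,ρ)) ≥ c ρ^{n−1} for every x ∈ S and every 0 < ρ < r₀. Then there is a constant C depending only on n and c such that: for every η > 0, every s > 0 with s/10 < r₀, and every finite family of points {x_h}_{h ∈ I} ⊆ S with pairwise distances at least s/5, the number of indices h with β_μ(x_h, s) > η is at most C η^{−2} s^{1−n} ∫_{ℝ^n} β_μ(z, 2s)² dμ(z). -/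

import Mathlib

open MeasureTheory Metric
open scoped ENNReal Classical

/-- The Jones-type β-number of a measure `μ` at center `x` and scale `r`:
`β_μ(x,r) = inf_P r^{-n} ∫_{B(x,r)} dist(z,P) dμ(z)`, the infimum running over all
affine hyperplanes `P` (nonempty affine subspaces whose direction has dimension `n-1`). -/
noncomputable def betaNum (n : ℕ) (μ : Measure (EuclideanSpace ℝ (Fin n)))
    (x : EuclideanSpace ℝ (Fin n)) (r : ℝ) : ℝ≥0∞ :=
  ⨅ (P : AffineSubspace ℝ (EuclideanSpace ℝ (Fin n)))
    (_ : (P : Set (EuclideanSpace ℝ (Fin n))).Nonempty)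
    (_ : Module.finrank ℝ P.direction = n - 1),
    ENNReal.ofReal (r ^ (-(n : ℝ))) *
      ∫⁻ z in ball x r,
        ENNReal.ofReal (infDist z (P : Set (EuclideanSpace ℝ (Fin n)))) ∂μ

lemma betaNum_key (n : ℕ) (μ : Measure (EuclideanSpace ℝ (Fin n)))
    {x z : EuclideanSpace ℝ (Fin n)} {s η : ℝ} (hs : 0 < s)
    (hz : z ∈ ball x (s / 10)) (hbad : ENNReal.ofReal η < betaNum n μ x s) :
    ENNReal.ofReal (η / 2 ^ (n : ℝ)) ≤ betaNum n μ z (2 * s) := by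
  have h2n : (0:ℝ) < 2 ^ (n:ℝ) := Real.rpow_natCast 2 n ▸ by positivity
  rw [betaNum]
  refine le_iInf fun P => le_iInf fun hP => le_iInf fun hdim => ?_
  set T := ENNReal.ofReal ((2*s) ^ (-(n:ℝ))) *
      ∫⁻ w in ball z (2*s),
        ENNReal.ofReal (infDist w (P : Set (EuclideanSpace ℝ (Fin n)))) ∂μ with hT
  have hsub : ball x s ⊆ ball z (2 * s) := by
    intro w hw
    have h1 : dist w x < s := mem_ball.1 hw
    have h2 : dist z x < s / 10 := mem_ball.1 hz
    have : dist w z ≤ dist w x + dist x z := dist_triangle w x z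
    rw [dist_comm x z] at this
    have := this.trans_lt (by linarith : dist w x + dist z x < 2 * s)
    exact mem_ball.2 this
  have hcoef : ENNReal.ofReal (s ^ (-(n:ℝ))) =
      ENNReal.ofReal (2 ^ (n:ℝ)) * ENNReal.ofReal ((2*s) ^ (-(n:ℝ))) := by
    rw [← ENNReal.ofReal_mul h2n.le]
    congr 1
    rw [Real.mul_rpow (by norm_num) hs.le, ← mul_assoc, ← Real.rpow_add (by norm_num),
      add_neg_cancel, Real.rpow_zero, one_mul]
  have hterm : betaNum n μ x s ≤ ENNReal.ofReal (2 ^ (n:ℝ)) * T := by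
    refine le_trans (iInf_le_of_le P (iInf_le_of_le hP (iInf_le _ hdim))) ?_
    rw [hT, ← mul_assoc, ← hcoef]
    exact mul_le_mul_right (lintegral_mono' (Measure.restrict_mono hsub le_rfl) le_rfl) _
  have : ENNReal.ofReal η ≤ T * ENNReal.ofReal (2 ^ (n:ℝ)) := by
    rw [mul_comm]; exact (hbad.trans_le hterm).le
  have := ENNReal.div_le_of_le_mul this
  rwa [ENNReal.ofReal_div_of_pos h2n]

/-- Counting β-bad centers of a separated net under a lower Ahlfors–David bound:
the number of `s/5`-separated points of `S` with `β_μ(x,s) > η` is at most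
`C η⁻² s^{1-n} ∫ β_μ(z,2s)² dμ(z)`, with `C = C(n,c)`. -/
theorem betaNum_bad_count
    (n : ℕ) (hn : 2 ≤ n) (c : ℝ) (hc : 0 < c) :
    ∃ C : ℝ, 0 < C ∧
      ∀ (μ : Measure (EuclideanSpace ℝ (Fin n))), IsFiniteMeasure μ →
      ∀ (S : Set (EuclideanSpace ℝ (Fin n))) (r₀ : ℝ), 0 < r₀ →
      (∀ x ∈ S, ∀ ρ : ℝ, 0 < ρ → ρ < r₀ →
        ENNReal.ofReal (c * ρ ^ (n - 1)) ≤ μ (ball x ρ)) →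
      ∀ η : ℝ, 0 < η → ∀ s : ℝ, 0 < s → s / 10 < r₀ →
      ∀ I : Finset (EuclideanSpace ℝ (Fin n)), (↑I : Set (EuclideanSpace ℝ (Fin n))) ⊆ S →
      (∀ x ∈ I, ∀ y ∈ I, x ≠ y → s / 5 ≤ dist x y) →
      ((I.filter fun x => ENNReal.ofReal η < betaNum n μ x s).card : ℝ≥0∞) ≤
        ENNReal.ofReal (C * η ^ (-2 : ℝ) * s ^ ((1 : ℝ) - n)) *
          ∫⁻ z, (betaNum n μ z (2 * s)) ^ 2 ∂μ := by
  refine ⟨2 ^ (2 * n) * 10 ^ (n - 1) / c, by positivity, ?_⟩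
  intro μ _ S r₀ hr₀ hAD η hη s hs hsr I hIS hsep
  set T := I.filter fun x => ENNReal.ofReal η < betaNum n μ x s with hTdef
  set b := ENNReal.ofReal ((η / 2 ^ (n:ℝ)) ^ 2) with hb
  set U := ⋃ x ∈ T, ball x (s / 10) with hU
  have hs10 : (0:ℝ) < s / 10 := by linarith
  -- pointwise lower bound on U
  have hpt : ∀ z ∈ U, b ≤ (betaNum n μ z (2 * s)) ^ 2 := by
    intro z hz
    rw [hU, Set.mem_iUnion₂] at hz
    obtain ⟨x, hx, hzx⟩ := hz
    have hbad : ENNReal.ofReal η < betaNum n μ x s := (Finset.mem_filter.1 hx).2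
    have := betaNum_key n μ hs hzx hbad
    calc b = (ENNReal.ofReal (η / 2 ^ (n:ℝ))) ^ 2 := by
            rw [hb, ENNReal.ofReal_pow (by positivity)]
      _ ≤ (betaNum n μ z (2 * s)) ^ 2 := pow_le_pow_left₀ zero_le this 2
  have hUmeas : MeasurableSet U := by
    exact MeasurableSet.biUnion T.countable_toSet fun x _ => measurableSet_ball
  -- integral lower bound
  have hint : b * μ U ≤ ∫⁻ z, (betaNum n μ z (2 * s)) ^ 2 ∂μ := by
    have : ∫⁻ z, U.indicator (fun _ => b) z ∂μ ≤ ∫⁻ z, (betaNum n μ z (2 * s)) ^ 2 ∂μ := by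
      refine lintegral_mono fun z => ?_
      by_cases hz : z ∈ U
      · rw [Set.indicator_of_mem hz]; exact hpt z hz
      · rw [Set.indicator_of_notMem hz]; exact zero_le
    rwa [lintegral_indicator hUmeas, setLIntegral_const] at this
  -- measure of U
  have hdisj : (↑T : Set (EuclideanSpace ℝ (Fin n))).PairwiseDisjoint
      fun x => ball x (s / 10) := by
    intro x hx y hy hxy
    refine ball_disjoint_ball ?_
    have := hsep x (Finset.filter_subset _ _ hx) y (Finset.filter_subset _ _ hy) hxy
    linarith
  have hμU : μ U = ∑ x ∈ T, μ (ball x (s / 10)) :=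
    measure_biUnion_finset hdisj fun x _ => measurableSet_ball
  have hmeaslb : (T.card : ℝ≥0∞) * ENNReal.ofReal (c * (s / 10) ^ (n - 1)) ≤ μ U := by
    rw [hμU]
    calc (T.card : ℝ≥0∞) * ENNReal.ofReal (c * (s / 10) ^ (n - 1))
        = ∑ _x ∈ T, ENNReal.ofReal (c * (s / 10) ^ (n - 1)) := by
          rw [Finset.sum_const, nsmul_eq_mul]
      _ ≤ ∑ x ∈ T, μ (ball x (s / 10)) := by
          refine Finset.sum_le_sum fun x hx => ?_
          exact hAD x (hIS (Finset.filter_subset _ _ hx)) (s/10) hs10 hsr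
  -- combine
  have hmain : (T.card : ℝ≥0∞) * (ENNReal.ofReal (c * (s / 10) ^ (n - 1)) * b) ≤
      ∫⁻ z, (betaNum n μ z (2 * s)) ^ 2 ∂μ := by
    calc (T.card : ℝ≥0∞) * (ENNReal.ofReal (c * (s / 10) ^ (n - 1)) * b)
        = b * ((T.card : ℝ≥0∞) * ENNReal.ofReal (c * (s / 10) ^ (n - 1))) := by ring
      _ ≤ b * μ U := mul_le_mul_right hmeaslb _
      _ ≤ _ := hint
  -- arithmetic identity
  have hone : ENNReal.ofReal (2 ^ (2 * n) * 10 ^ (n - 1) / c * η ^ (-2:ℝ) * s ^ ((1:ℝ) - n)) *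
      (ENNReal.ofReal (c * (s / 10) ^ (n - 1)) * b) = 1 := by
    rw [hb, ← ENNReal.ofReal_mul (by positivity), ← ENNReal.ofReal_mul (by positivity)]
    rw [show (1:ℝ≥0∞) = ENNReal.ofReal 1 by simp]
    congr 1
    have hη2 : η ^ (-2:ℝ) = (η ^ 2)⁻¹ := by
      rw [← Real.rpow_natCast η 2, ← Real.rpow_neg hη.le]; norm_num
    have h2n : (2:ℝ) ^ (n:ℝ) = 2 ^ n := Real.rpow_natCast 2 n
    have hs1n : s ^ ((1:ℝ) - n) = (s ^ (n - 1))⁻¹ := by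
      rw [← Real.rpow_natCast s (n - 1), ← Real.rpow_neg hs.le]
      congr 1
      push_cast [Nat.cast_sub (by omega : 1 ≤ n)]
      ring
    rw [hη2, hs1n, h2n]
    have h10 : (10:ℝ) ^ (n-1) ≠ 0 := by positivity
    have hsn : (s:ℝ) ^ (n-1) ≠ 0 := by positivity
    have h2nn : (2:ℝ) ^ n ≠ 0 := by positivity
    field_simp
    ring_nf
    have h110 : ((1:ℝ)/10)^(n-1) * 10^(n-1) = 1 := by rw [← mul_pow]; norm_num
    linear_combination (s^(n-1) * 2^(n*2)) * h110
  calc (T.card : ℝ≥0∞) = (T.card : ℝ≥0∞) * 1 := (mul_one _).symm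
    _ = ENNReal.ofReal (2 ^ (2 * n) * 10 ^ (n - 1) / c * η ^ (-2:ℝ) * s ^ ((1:ℝ) - n)) *
        ((T.card : ℝ≥0∞) * (ENNReal.ofReal (c * (s / 10) ^ (n - 1)) * b)) := by
        rw [← hone]; ring
    _ ≤ _ := mul_le_mul_right hmain _
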